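/- arXiv:1108.3693 — 8 statements merged into one kernel-verified Lean document; each statement's English description precedes it below -/
import Mathlib

section
/- Pullback identity for the contact form under front spinning (key identity in the proof of Proposition 1.4): let n ≥ 1, let E be a real normed vector space, and let f : E → ℝ^{2n+1} have component functions x_1, y_1, …, x_n, y_n, z, each differentiable at a point p ∈ E. Then for every θ ∈ ℝ the front-spun map Σf is differentiable at (p, θ), and for all v ∈ E and s ∈ ℝ, writing (X_0, Y_0, X_1, Y_1, …, X_n, Y_n, Z) for the component functions of Σf, one has DZ(p,θ)(v,s) − Σ_{i=0}^{n} Y_i(p,θ)·DX_i(p,θ)(v,s) = Dz(p)(v) − Σ_{i=1}^{n} y_i(p)·Dx_i(p)(v). Equivalently, the pullback of the contact form α_{n+1} under Σf equals the pullback of f*α_n under the projection E × ℝ → E. -/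
/-!
Pullback identity for the contact form under front spinning.

Coordinates on `ℝ^{2n+1}` are `(x_1, y_1, …, x_n, y_n, z)`; a map
`f : E → ℝ^{2n+1}` is given by its component functions
`x i, y i : E → ℝ` (for `i = 1, …, n`) and `z : E → ℝ`.

The front spinning `Σf : E × ℝ → ℝ^{2n+3}` has component functions
`X_0 = x_1 sin θ`, `Y_0 = y_1 sin θ`, `X_1 = x_1 cos θ`, `Y_1 = y_1 cos θ`,
`X_i = x_i`, `Y_i = y_i` for `i ≥ 2`, and `Z = z`.
-/

/-- The `x`-component functions of the front-spun map. -/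
noncomputable def spinX {E : Type*} (x : ℕ → E → ℝ) : ℕ → E × ℝ → ℝ
  | 0 => fun q => x 1 q.1 * Real.sin q.2
  | 1 => fun q => x 1 q.1 * Real.cos q.2
  | (i + 2) => fun q => x (i + 2) q.1

/-- The `y`-component functions of the front-spun map. -/
noncomputable def spinY {E : Type*} (y : ℕ → E → ℝ) : ℕ → E × ℝ → ℝ
  | 0 => fun q => y 1 q.1 * Real.sin q.2
  | 1 => fun q => y 1 q.1 * Real.cos q.2
  | (i + 2) => fun q => y (i + 2) q.1

/-- The `z`-component function of the front-spun map. -/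
def spinZ {E : Type*} (z : E → ℝ) : E × ℝ → ℝ := fun q => z q.1

/-- **Pullback identity for the contact form under front spinning.**
If the component functions of `f` are differentiable at `p`, then the component
functions of `Σf` are differentiable at `(p, θ)` and
`DZ(p,θ)(v,s) − Σ_{i=0}^{n} Y_i(p,θ)·DX_i(p,θ)(v,s)
  = Dz(p)(v) − Σ_{i=1}^{n} y_i(p)·Dx_i(p)(v)`,
i.e. `(Σf)^* α_{n+1}` is the pullback of `f^* α_n` under the projection
`E × ℝ → E`. -/
theorem front_spinning_contact_form_pullback
    {E : Type*} [NormedAddCommGroup E] [NormedSpace ℝ E]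
    (n : ℕ) (hn : 1 ≤ n) (x y : ℕ → E → ℝ) (z : E → ℝ) (p : E)
    (hx : ∀ i ∈ Finset.Icc 1 n, DifferentiableAt ℝ (x i) p)
    (hy : ∀ i ∈ Finset.Icc 1 n, DifferentiableAt ℝ (y i) p)
    (hz : DifferentiableAt ℝ z p) (θ : ℝ) :
    (∀ i ∈ Finset.Icc 0 n,
        DifferentiableAt ℝ (spinX x i) (p, θ) ∧ DifferentiableAt ℝ (spinY y i) (p, θ)) ∧
    DifferentiableAt ℝ (spinZ z) (p, θ) ∧
    ∀ (v : E) (s : ℝ),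
      fderiv ℝ (spinZ z) (p, θ) (v, s) -
          ∑ i ∈ Finset.Icc 0 n, spinY y i (p, θ) * fderiv ℝ (spinX x i) (p, θ) (v, s) =
        fderiv ℝ z p v - ∑ i ∈ Finset.Icc 1 n, y i p * fderiv ℝ (x i) p v := by
  have h1m : (1:ℕ) ∈ Finset.Icc 1 n := Finset.mem_Icc.2 ⟨le_refl 1, hn⟩
  have hx1 := hx 1 h1m
  have hy1 := hy 1 h1m
  have key : ∀ (g : E → ℝ), DifferentiableAt ℝ g p →
      HasFDerivAt (fun q : E × ℝ => g q.1)
        ((fderiv ℝ g p).comp (ContinuousLinearMap.fst ℝ E ℝ)) (p, θ) := fun g hg =>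
    hg.hasFDerivAt.comp (p, θ) hasFDerivAt_fst
  have hsin : HasFDerivAt (fun q : E × ℝ => Real.sin q.2)
      (Real.cos θ • (ContinuousLinearMap.snd ℝ E ℝ)) (p, θ) := by
    simpa [Function.comp_def] using (Real.hasDerivAt_sin θ).comp_hasFDerivAt (f := Prod.snd) (p, θ) hasFDerivAt_snd
  have hcos : HasFDerivAt (fun q : E × ℝ => Real.cos q.2)
      ((-Real.sin θ) • (ContinuousLinearMap.snd ℝ E ℝ)) (p, θ) := by
    exact (Real.hasDerivAt_cos θ).comp_hasFDerivAt (f := Prod.snd) (p, θ) (hasFDerivAt_snd (𝕜 := ℝ) (E := E) (F := ℝ) (p := (p, θ)))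
  have hspin : ∀ (w : ℕ → E → ℝ), DifferentiableAt ℝ (w 1) p →
      HasFDerivAt (fun q : E × ℝ => w 1 q.1 * Real.sin q.2)
        (w 1 p • (Real.cos θ • (ContinuousLinearMap.snd ℝ E ℝ)) +
          Real.sin θ • ((fderiv ℝ (w 1) p).comp (ContinuousLinearMap.fst ℝ E ℝ))) (p, θ) :=
    fun w hw => (key (w 1) hw).mul hsin
  have hspinc : ∀ (w : ℕ → E → ℝ), DifferentiableAt ℝ (w 1) p →
      HasFDerivAt (fun q : E × ℝ => w 1 q.1 * Real.cos q.2)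
        (w 1 p • ((-Real.sin θ) • (ContinuousLinearMap.snd ℝ E ℝ)) +
          Real.cos θ • ((fderiv ℝ (w 1) p).comp (ContinuousLinearMap.fst ℝ E ℝ))) (p, θ) :=
    fun w hw => (key (w 1) hw).mul hcos
  have hX0 := hspin x hx1
  have hX1 := hspinc x hx1
  have hZ := key z hz
  refine ⟨?_, hZ.differentiableAt, ?_⟩
  · intro i hi
    have hi' := (Finset.mem_Icc.1 hi).2
    match i with
    | 0 => exact ⟨hX0.differentiableAt, (hspin y hy1).differentiableAt⟩
    | 1 => exact ⟨hX1.differentiableAt, (hspinc y hy1).differentiableAt⟩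
    | (j + 2) =>
      have hm : j + 2 ∈ Finset.Icc 1 n := Finset.mem_Icc.2 ⟨by omega, hi'⟩
      exact ⟨(key _ (hx _ hm)).differentiableAt, (key _ (hy _ hm)).differentiableAt⟩
  · intro v s
    have eZ : fderiv ℝ (spinZ z) (p, θ) (v, s) = fderiv ℝ z p v := by
      rw [show spinZ z = fun q : E × ℝ => z q.1 from rfl, hZ.fderiv]; simp
    have eX0 : fderiv ℝ (spinX x 0) (p, θ) (v, s) =
        x 1 p * (Real.cos θ * s) + Real.sin θ * fderiv ℝ (x 1) p v := by
      rw [show spinX x 0 = fun q : E × ℝ => x 1 q.1 * Real.sin q.2 from rfl,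
        hX0.fderiv]; simp
    have eX1 : fderiv ℝ (spinX x 1) (p, θ) (v, s) =
        x 1 p * (-Real.sin θ * s) + Real.cos θ * fderiv ℝ (x 1) p v := by
      rw [show spinX x 1 = fun q : E × ℝ => x 1 q.1 * Real.cos q.2 from rfl,
        hX1.fderiv]; simp
    have sY0 : spinY y 0 (p, θ) = y 1 p * Real.sin θ := rfl
    have sY1 : spinY y 1 (p, θ) = y 1 p * Real.cos θ := rfl
    have hsplit0 : Finset.Icc 0 n = insert 0 (Finset.Icc 1 n) := by
      ext i; simp [Finset.mem_Icc]; omega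
    have hsplit1 : Finset.Icc 1 n = insert 1 (Finset.Icc 2 n) := by
      ext i; simp [Finset.mem_Icc]; omega
    have h1not : (1:ℕ) ∉ Finset.Icc 2 n := by simp
    have hsum : ∑ i ∈ Finset.Icc 2 n, spinY y i (p, θ) * fderiv ℝ (spinX x i) (p, θ) (v, s) =
        ∑ i ∈ Finset.Icc 2 n, y i p * fderiv ℝ (x i) p v := by
      refine Finset.sum_congr rfl fun i hi => ?_
      have hi' := Finset.mem_Icc.1 hi
      obtain ⟨j, rfl⟩ : ∃ j, i = j + 2 := ⟨i - 2, by omega⟩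
      have hm : j + 2 ∈ Finset.Icc 1 n := Finset.mem_Icc.2 ⟨by omega, hi'.2⟩
      have := (key _ (hx _ hm)).fderiv
      show y (j + 2) p * fderiv ℝ (spinX x (j + 2)) (p, θ) (v, s) = _
      rw [show spinX x (j + 2) = fun q : E × ℝ => x (j + 2) q.1 from rfl, this]
      simp
    rw [hsplit0, Finset.sum_insert (by simp [hsplit1]), hsplit1,
      Finset.sum_insert h1not, Finset.sum_insert h1not,
      hsum, eZ, eX0, eX1, sY0, sY1]
    linear_combination (-(y 1 p * fderiv ℝ (x 1) p v)) * Real.sin_sq_add_cos_sq θ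
end

section
/- Front spinning preserves the Legendrian condition (from the proof of Proposition 1.4): let n ≥ 1, let E be a real normed vector space, and let f : E → ℝ^{2n+1} have differentiable component functions x_1, y_1, …, x_n, y_n, z satisfying the Legendrian condition Dz(p)(v) = Σ_{i=1}^{n} y_i(p)·Dx_i(p)(v) for all p ∈ E and v ∈ E. Then the front-spun map Σf : E × ℝ → ℝ^{2n+3}, with component functions (X_0, Y_0, …, X_n, Y_n, Z), satisfies the Legendrian condition for α_{n+1}: DZ(p,θ)(v,s) = Σ_{i=0}^{n} Y_i(p,θ)·DX_i(p,θ)(v,s) for all (p,θ) ∈ E × ℝ and all (v,s) ∈ E × ℝ. -/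
/-!
Front spinning preserves the Legendrian condition.

Coordinates on `ℝ^{2n+1}` are `(x_1, y_1, …, x_n, y_n, z)`; a map
`f : E → ℝ^{2n+1}` is given by its component functions
`x i, y i : E → ℝ` (for `i = 1, …, n`) and `z : E → ℝ`.

The front spinning `Σf : E × ℝ → ℝ^{2n+3}` has component functions
`X_0 = x_1 sin θ`, `Y_0 = y_1 sin θ`, `X_1 = x_1 cos θ`, `Y_1 = y_1 cos θ`,
`X_i = x_i`, `Y_i = y_i` for `i ≥ 2`, and `Z = z`.
-/


section FrontSpinHelpers
variable {E : Type*} [NormedAddCommGroup E] [NormedSpace ℝ E]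

lemma fd_fst {g : E → ℝ} {p : E} (hg : DifferentiableAt ℝ g p) (θ : ℝ) (v : E) (s : ℝ) :
    fderiv ℝ (fun q : E × ℝ => g q.1) (p, θ) (v, s) = fderiv ℝ g p v := by
  have h : HasFDerivAt (fun q : E × ℝ => g q.1)
      ((fderiv ℝ g p).comp (ContinuousLinearMap.fst ℝ E ℝ)) (p, θ) :=
    hg.hasFDerivAt.comp _ hasFDerivAt_fst
  rw [h.fderiv]; rfl

lemma fd_sin {g : E → ℝ} {p : E} (hg : DifferentiableAt ℝ g p) (θ : ℝ) (v : E) (s : ℝ) :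
    fderiv ℝ (fun q : E × ℝ => g q.1 * Real.sin q.2) (p, θ) (v, s) =
      fderiv ℝ g p v * Real.sin θ + g p * (Real.cos θ * s) := by
  have h1 : HasFDerivAt (fun q : E × ℝ => g q.1)
      ((fderiv ℝ g p).comp (ContinuousLinearMap.fst ℝ E ℝ)) (p, θ) :=
    hg.hasFDerivAt.comp _ hasFDerivAt_fst
  have h2 : HasFDerivAt (fun q : E × ℝ => Real.sin q.2)
      (((1 : ℝ →L[ℝ] ℝ).smulRight (Real.cos θ)).comp (ContinuousLinearMap.snd ℝ E ℝ)) (p, θ) :=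
    by have := (Real.hasDerivAt_sin θ).hasFDerivAt.comp (p, θ) (hasFDerivAt_snd (p := (p, θ)) (𝕜 := ℝ)); exact this
  rw [HasFDerivAt.fderiv (f := fun q : E × ℝ => g q.1 * Real.sin q.2) (h1.mul h2)]
  simp
  ring

lemma fd_cos {g : E → ℝ} {p : E} (hg : DifferentiableAt ℝ g p) (θ : ℝ) (v : E) (s : ℝ) :
    fderiv ℝ (fun q : E × ℝ => g q.1 * Real.cos q.2) (p, θ) (v, s) =
      fderiv ℝ g p v * Real.cos θ - g p * (Real.sin θ * s) := by
  have h1 : HasFDerivAt (fun q : E × ℝ => g q.1)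
      ((fderiv ℝ g p).comp (ContinuousLinearMap.fst ℝ E ℝ)) (p, θ) :=
    hg.hasFDerivAt.comp _ hasFDerivAt_fst
  have h2 : HasFDerivAt (fun q : E × ℝ => Real.cos q.2)
      (((1 : ℝ →L[ℝ] ℝ).smulRight (-Real.sin θ)).comp (ContinuousLinearMap.snd ℝ E ℝ)) (p, θ) :=
    by have := (Real.hasDerivAt_cos θ).hasFDerivAt.comp (p, θ) (hasFDerivAt_snd (p := (p, θ)) (𝕜 := ℝ)); exact this
  rw [HasFDerivAt.fderiv (f := fun q : E × ℝ => g q.1 * Real.cos q.2) (h1.mul h2)]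
  simp
  ring

end FrontSpinHelpers

/-- **Front spinning preserves the Legendrian condition.**
If `f` has differentiable component functions satisfying
`Dz(p)(v) = Σ_{i=1}^{n} y_i(p)·Dx_i(p)(v)` for all `p, v`, then the
front-spun map `Σf` satisfies
`DZ(p,θ)(v,s) = Σ_{i=0}^{n} Y_i(p,θ)·DX_i(p,θ)(v,s)` for all `(p,θ)` and
`(v,s)`. -/
theorem front_spinning_preserves_legendrian
    {E : Type*} [NormedAddCommGroup E] [NormedSpace ℝ E]
    (n : ℕ) (hn : 1 ≤ n) (x y : ℕ → E → ℝ) (z : E → ℝ)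
    (hx : ∀ i ∈ Finset.Icc 1 n, Differentiable ℝ (x i))
    (hy : ∀ i ∈ Finset.Icc 1 n, Differentiable ℝ (y i))
    (hz : Differentiable ℝ z)
    (hleg : ∀ (p : E) (v : E),
      fderiv ℝ z p v = ∑ i ∈ Finset.Icc 1 n, y i p * fderiv ℝ (x i) p v) :
    ∀ (p : E) (θ : ℝ) (v : E) (s : ℝ),
      fderiv ℝ (spinZ z) (p, θ) (v, s) =
        ∑ i ∈ Finset.Icc 0 n, spinY y i (p, θ) * fderiv ℝ (spinX x i) (p, θ) (v, s) := by
  intro p θ v s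
  have hx1 : DifferentiableAt ℝ (x 1) p := (hx 1 (by simp [hn])) p
  have hs0 : Finset.Icc 0 n = insert 0 (Finset.Icc 1 n) := by
    ext i; simp; omega
  have h1mem : (1 : ℕ) ∈ Finset.Icc 1 n := by simp [hn]
  rw [hs0, Finset.sum_insert (by simp), ← Finset.add_sum_erase _ _ h1mem]
  have htail : ∀ i ∈ (Finset.Icc 1 n).erase 1,
      spinY y i (p, θ) * fderiv ℝ (spinX x i) (p, θ) (v, s)
        = y i p * fderiv ℝ (x i) p v := by
    intro i hi
    simp only [Finset.mem_erase, Finset.mem_Icc] at hi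
    obtain ⟨j, rfl⟩ : ∃ j, i = j + 2 := ⟨i - 2, by omega⟩
    have hxi : DifferentiableAt ℝ (x (j + 2)) p :=
      (hx _ (by simp; omega)) p
    show y (j + 2) p * fderiv ℝ (fun q : E × ℝ => x (j + 2) q.1) (p, θ) (v, s) = _
    rw [fd_fst hxi]
  rw [Finset.sum_congr rfl htail]
  have hZ : fderiv ℝ (spinZ z) (p, θ) (v, s) = fderiv ℝ z p v := fd_fst (hz p) θ v s
  have h0 : spinY y 0 (p, θ) * fderiv ℝ (spinX x 0) (p, θ) (v, s)
      = y 1 p * Real.sin θ * (fderiv ℝ (x 1) p v * Real.sin θ + x 1 p * (Real.cos θ * s)) := by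
    show y 1 p * Real.sin θ * fderiv ℝ (fun q : E × ℝ => x 1 q.1 * Real.sin q.2) (p, θ) (v, s) = _
    rw [fd_sin hx1]
  have h1 : spinY y 1 (p, θ) * fderiv ℝ (spinX x 1) (p, θ) (v, s)
      = y 1 p * Real.cos θ * (fderiv ℝ (x 1) p v * Real.cos θ - x 1 p * (Real.sin θ * s)) := by
    show y 1 p * Real.cos θ * fderiv ℝ (fun q : E × ℝ => x 1 q.1 * Real.cos q.2) (p, θ) (v, s) = _
    rw [fd_cos hx1]
  rw [hZ, h0, h1, hleg p v, ← Finset.add_sum_erase _ _ h1mem]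
  linear_combination (-(y 1 p * fderiv ℝ (x 1) p v)) * Real.sin_sq_add_cos_sq θ
end

section
/- Front spinning preserves immersions (from the proof of Proposition 1.4): let n ≥ 1, let E be a real normed vector space, and let f : E → ℝ^{2n+1} have component functions x_1, y_1, …, x_n, y_n, z, each differentiable at p ∈ E. If the derivative Df(p) : E → ℝ^{2n+1} is injective and x_1(p) ≠ 0, then for every θ ∈ ℝ the derivative D(Σf)(p,θ) : E × ℝ → ℝ^{2n+3} of the front-spun map is injective. -/
/-- The map `f : E → ℝ^{2n+1}` bundled from its component functions
`x_1, …, x_n, y_1, …, y_n, z`. -/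
def bundleMap {E : Type*} (n : ℕ) (x y : ℕ → E → ℝ) (z : E → ℝ) :
    E → (Fin n → ℝ) × (Fin n → ℝ) × ℝ :=
  fun p => (fun i => x ((i : ℕ) + 1) p, fun i => y ((i : ℕ) + 1) p, z p)

/-- The front-spun map `Σf : E × ℝ → ℝ^{2n+3}` bundled from its component
functions `X_0, …, X_n, Y_0, …, Y_n, Z`. -/
noncomputable def spinBundleMap {E : Type*} (n : ℕ) (x y : ℕ → E → ℝ) (z : E → ℝ) :
    E × ℝ → (Fin (n + 1) → ℝ) × (Fin (n + 1) → ℝ) × ℝ :=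
  fun q => (fun i => spinX x (i : ℕ) q, fun i => spinY y (i : ℕ) q, spinZ z q)

open ContinuousLinearMap in
/-- Derivative CLMs of the spun component functions. -/
noncomputable def spinD {E : Type*} [NormedAddCommGroup E] [NormedSpace ℝ E]
    (x : ℕ → E → ℝ) (p : E) (θ : ℝ) : ℕ → (E × ℝ →L[ℝ] ℝ)
  | 0 => x 1 p • (((1 : ℝ →L[ℝ] ℝ).smulRight (Real.cos θ)).comp (snd ℝ E ℝ)) +
      Real.sin θ • ((fderiv ℝ (x 1) p).comp (fst ℝ E ℝ))
  | 1 => x 1 p • (((1 : ℝ →L[ℝ] ℝ).smulRight (-Real.sin θ)).comp (snd ℝ E ℝ)) +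
      Real.cos θ • ((fderiv ℝ (x 1) p).comp (fst ℝ E ℝ))
  | (i + 2) => (fderiv ℝ (x (i + 2)) p).comp (fst ℝ E ℝ)


/-- **Front spinning preserves immersions.**
If the component functions of `f` are differentiable at `p`, the derivative
`Df(p) : E → ℝ^{2n+1}` is injective and `x_1(p) ≠ 0`, then for every `θ` the
derivative `D(Σf)(p,θ) : E × ℝ → ℝ^{2n+3}` is injective. -/
theorem front_spinning_preserves_immersion
    {E : Type*} [NormedAddCommGroup E] [NormedSpace ℝ E]
    (n : ℕ) (hn : 1 ≤ n) (x y : ℕ → E → ℝ) (z : E → ℝ) (p : E)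
    (hx : ∀ i ∈ Finset.Icc 1 n, DifferentiableAt ℝ (x i) p)
    (hy : ∀ i ∈ Finset.Icc 1 n, DifferentiableAt ℝ (y i) p)
    (hz : DifferentiableAt ℝ z p)
    (hinj : Function.Injective (fderiv ℝ (bundleMap n x y z) p))
    (hx1 : x 1 p ≠ 0) :
    ∀ θ : ℝ, Function.Injective (fderiv ℝ (spinBundleMap n x y z) (p, θ)) := by
  intro θ
  have h1n : (1 : ℕ) ∈ Finset.Icc 1 n := by simp [hn]
  -- derivative of each spun component
  have key : ∀ (w : ℕ → E → ℝ), (∀ i ∈ Finset.Icc 1 n, DifferentiableAt ℝ (w i) p) →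
      ∀ i : Fin (n + 1), HasFDerivAt (fun q => spinX w (i : ℕ) q) (spinD w p θ (i : ℕ)) (p, θ) := by
    intro w hw ⟨i, hi⟩
    match i, hi with
    | 0, _ =>
      have h := (((hw 1 h1n).hasFDerivAt.comp (f := Prod.fst) (p, θ) (hasFDerivAt_fst)).mul
        (((Real.hasDerivAt_sin θ).hasFDerivAt).comp (f := Prod.snd) (p, θ) hasFDerivAt_snd))
      exact h
    | 1, _ =>
      have h := (((hw 1 h1n).hasFDerivAt.comp (f := Prod.fst) (p, θ) (hasFDerivAt_fst)).mul
        (((Real.hasDerivAt_cos θ).hasFDerivAt).comp (f := Prod.snd) (p, θ) hasFDerivAt_snd))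
      exact h
    | (k + 2), hk =>
      have hm : (k + 2) ∈ Finset.Icc 1 n := by
        simp only [Finset.mem_Icc]; omega
      exact ((hw _ hm).hasFDerivAt.comp (f := Prod.fst) (p, θ) hasFDerivAt_fst)
  have keyY := key y hy
  have keyX := key x hx
  -- full derivative of the spun map
  have hL : HasFDerivAt (spinBundleMap n x y z)
      ((ContinuousLinearMap.pi fun i : Fin (n + 1) => spinD x p θ (i : ℕ)).prod
        ((ContinuousLinearMap.pi fun i : Fin (n + 1) => spinD y p θ (i : ℕ)).prod
          ((fderiv ℝ z p).comp (ContinuousLinearMap.fst ℝ E ℝ)))) (p, θ) :=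
    HasFDerivAt.prodMk (hasFDerivAt_pi.2 keyX)
      (HasFDerivAt.prodMk (hasFDerivAt_pi.2 keyY) (hz.hasFDerivAt.comp (f := Prod.fst) (p, θ) hasFDerivAt_fst))
  -- full derivative of the original map
  have hM : HasFDerivAt (bundleMap n x y z)
      ((ContinuousLinearMap.pi fun i : Fin n => fderiv ℝ (x ((i : ℕ) + 1)) p).prod
        ((ContinuousLinearMap.pi fun i : Fin n => fderiv ℝ (y ((i : ℕ) + 1)) p).prod
          (fderiv ℝ z p))) p := by
    refine HasFDerivAt.prodMk (hasFDerivAt_pi.2 ?_) (HasFDerivAt.prodMk (hasFDerivAt_pi.2 ?_) hz.hasFDerivAt) <;>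
      rintro ⟨i, hi⟩ <;>
      [exact (hx (i + 1) (by simp only [Finset.mem_Icc]; omega)).hasFDerivAt;
       exact (hy (i + 1) (by simp only [Finset.mem_Icc]; omega)).hasFDerivAt]
  rw [hL.fderiv]
  intro a b hab
  set u : E × ℝ := a - b with hu
  have h0 : (ContinuousLinearMap.pi fun i : Fin (n + 1) => spinD x p θ (i : ℕ)).prod
        ((ContinuousLinearMap.pi fun i : Fin (n + 1) => spinD y p θ (i : ℕ)).prod
          ((fderiv ℝ z p).comp (ContinuousLinearMap.fst ℝ E ℝ))) u = 0 := by
    rw [hu, map_sub, hab, sub_self]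
  obtain ⟨v, t⟩ := u
  have hXc : ∀ i : Fin (n + 1), spinD x p θ (i : ℕ) (v, t) = 0 := by
    intro i
    have := congrArg (fun w => w.1 i) h0
    simpa using this
  have hYc : ∀ i : Fin (n + 1), spinD y p θ (i : ℕ) (v, t) = 0 := by
    intro i
    have := congrArg (fun w => w.2.1 i) h0
    simpa using this
  have hZc : fderiv ℝ z p v = 0 := by
    have := congrArg (fun w => w.2.2) h0
    simpa using this
  have hpyth := Real.sin_sq_add_cos_sq θ
  have e0 : x 1 p * (t * Real.cos θ) + Real.sin θ * fderiv ℝ (x 1) p v = 0 := by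
    have := hXc ⟨0, by omega⟩
    simpa [spinD, smul_eq_mul] using this
  have e1 : x 1 p * (t * -Real.sin θ) + Real.cos θ * fderiv ℝ (x 1) p v = 0 := by
    have := hXc ⟨1, by omega⟩
    simpa [spinD, smul_eq_mul] using this
  have ht0 : t = 0 := by
    have hxt : x 1 p * t = 0 := by linear_combination Real.cos θ * e0 - Real.sin θ * e1 - x 1 p * t * hpyth
    rcases mul_eq_zero.1 hxt with h | h
    · exact absurd h hx1
    · exact h
  have hdx1 : fderiv ℝ (x 1) p v = 0 := by linear_combination Real.sin θ * e0 + Real.cos θ * e1 - (fderiv ℝ (x 1) p) v * hpyth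
  have f0 : y 1 p * (t * Real.cos θ) + Real.sin θ * fderiv ℝ (y 1) p v = 0 := by
    have := hYc ⟨0, by omega⟩
    simpa [spinD, smul_eq_mul] using this
  have f1 : y 1 p * (t * -Real.sin θ) + Real.cos θ * fderiv ℝ (y 1) p v = 0 := by
    have := hYc ⟨1, by omega⟩
    simpa [spinD, smul_eq_mul] using this
  have hdy1 : fderiv ℝ (y 1) p v = 0 := by
    linear_combination Real.sin θ * f0 + Real.cos θ * f1 - (fderiv ℝ (y 1) p) v * hpyth
  have hv0 : v = 0 := by
    have hMz : (ContinuousLinearMap.pi fun i : Fin n => fderiv ℝ (x ((i : ℕ) + 1)) p).prod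
        ((ContinuousLinearMap.pi fun i : Fin n => fderiv ℝ (y ((i : ℕ) + 1)) p).prod
          (fderiv ℝ z p)) v = 0 := by
      refine Prod.ext ?_ (Prod.ext ?_ ?_)
      · funext i
        obtain ⟨i, hi⟩ := i
        match i, hi with
        | 0, _ => simpa using hdx1
        | (k + 1), hk =>
          have := hXc ⟨k + 2, by omega⟩
          simpa [spinD] using this
      · funext i
        obtain ⟨i, hi⟩ := i
        match i, hi with
        | 0, _ => simpa using hdy1
        | (k + 1), hk =>
          have := hYc ⟨k + 2, by omega⟩
          simpa [spinD] using this
      · simpa using hZc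
    have := hinj (a₁ := v) (a₂ := 0) (by rw [hM.fderiv]; simpa [funext_iff] using hMz)
    exact this
  have : a - b = 0 := by
    rw [← hu] at *
    exact Prod.ext (by simpa using hv0) (by simpa using ht0)
  exact sub_eq_zero.1 this
end

section
/- Pullback identity for the primitive 1-form e^t·α under front spinning of a cobordism (Formula (4.9) in the paper): let n ≥ 1, let E be a real normed vector space, and let g : E → ℝ × ℝ^{2n+1} have component functions t, x_1, y_1, …, x_n, y_n, z, each differentiable at p ∈ E. Then for every θ ∈ ℝ and all (v, s) ∈ E × ℝ, writing (T, X_0, Y_0, …, X_n, Y_n, Z) for the component functions of Σg, one has e^{T(p,θ)}·(DZ(p,θ)(v,s) − Σ_{i=0}^{n} Y_i(p,θ)·DX_i(p,θ)(v,s)) = e^{t(p)}·(Dz(p)(v) − Σ_{i=1}^{n} y_i(p)·Dx_i(p)(v)). Equivalently, (Σg)*(e^t α_{n+1}) equals the pullback of g*(e^t α_n) under the projection E × ℝ → E. -/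
/-- The `t`-component function of the front-spun cobordism. -/
def spinT {E : Type*} (t : E → ℝ) : E × ℝ → ℝ := fun q => t q.1

/-- **Pullback identity for `e^t·α` under front spinning of a cobordism**
(Formula (4.9) in the paper). If the component functions of
`g : E → ℝ × ℝ^{2n+1}` are differentiable at `p`, then for every `θ` and
every `(v, s)`:
`e^{T(p,θ)}·(DZ(p,θ)(v,s) − Σ_{i=0}^{n} Y_i(p,θ)·DX_i(p,θ)(v,s))
  = e^{t(p)}·(Dz(p)(v) − Σ_{i=1}^{n} y_i(p)·Dx_i(p)(v))`,
i.e. `(Σg)^*(e^t α_{n+1})` is the pullback of `g^*(e^t α_n)` under the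
projection `E × ℝ → E`. -/
theorem front_spinning_primitive_one_form_pullback
    {E : Type*} [NormedAddCommGroup E] [NormedSpace ℝ E]
    (n : ℕ) (hn : 1 ≤ n) (t : E → ℝ) (x y : ℕ → E → ℝ) (z : E → ℝ) (p : E)
    (ht : DifferentiableAt ℝ t p)
    (hx : ∀ i ∈ Finset.Icc 1 n, DifferentiableAt ℝ (x i) p)
    (hy : ∀ i ∈ Finset.Icc 1 n, DifferentiableAt ℝ (y i) p)
    (hz : DifferentiableAt ℝ z p) :
    ∀ (θ : ℝ) (v : E) (s : ℝ),
      Real.exp (spinT t (p, θ)) *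
          (fderiv ℝ (spinZ z) (p, θ) (v, s) -
            ∑ i ∈ Finset.Icc 0 n, spinY y i (p, θ) * fderiv ℝ (spinX x i) (p, θ) (v, s)) =
        Real.exp (t p) *
          (fderiv ℝ z p v - ∑ i ∈ Finset.Icc 1 n, y i p * fderiv ℝ (x i) p v) := by
  intro θ v s
  have hx1 : DifferentiableAt ℝ (x 1) p := hx 1 (by simp [hn])
  -- fderiv of a function of the first coordinate
  have hfst : ∀ (f : E → ℝ), DifferentiableAt ℝ f p →
      fderiv ℝ (fun q : E × ℝ => f q.1) (p, θ) (v, s) = fderiv ℝ f p v := by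
    intro f hf
    have h : HasFDerivAt (fun q : E × ℝ => f q.1)
        ((fderiv ℝ f p).comp (ContinuousLinearMap.fst ℝ E ℝ)) (p, θ) :=
      hf.hasFDerivAt.comp (p, θ) hasFDerivAt_fst
    rw [h.fderiv]; rfl
  have hX1 : HasFDerivAt (fun q : E × ℝ => x 1 q.1)
      ((fderiv ℝ (x 1) p).comp (ContinuousLinearMap.fst ℝ E ℝ)) (p, θ) :=
    hx1.hasFDerivAt.comp (p, θ) hasFDerivAt_fst
  have Hsin : HasFDerivAt (fun q : E × ℝ => Real.sin q.2)
      (((1 : ℝ →L[ℝ] ℝ).smulRight (Real.cos θ)).comp (ContinuousLinearMap.snd ℝ E ℝ)) (p, θ) :=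
    by have h := (Real.hasDerivAt_sin θ).hasFDerivAt.comp (p, θ) (hasFDerivAt_snd (𝕜 := ℝ) (p := (p, θ))); exact h
  have Hcos : HasFDerivAt (fun q : E × ℝ => Real.cos q.2)
      (((1 : ℝ →L[ℝ] ℝ).smulRight (-Real.sin θ)).comp (ContinuousLinearMap.snd ℝ E ℝ)) (p, θ) :=
    by have h := (Real.hasDerivAt_cos θ).hasFDerivAt.comp (p, θ) (hasFDerivAt_snd (𝕜 := ℝ) (p := (p, θ))); exact h
  have hSX0 : fderiv ℝ (spinX x 0) (p, θ) (v, s)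
      = x 1 p * (s * Real.cos θ) + Real.sin θ * fderiv ℝ (x 1) p v := by
    have h := HasFDerivAt.fderiv (f := fun q : E × ℝ => x 1 q.1 * Real.sin q.2) (hX1.mul Hsin)
    have e : spinX x 0 = fun q : E × ℝ => x 1 q.1 * Real.sin q.2 := rfl
    rw [e, h]; simp [smul_eq_mul]
  have hSX1 : fderiv ℝ (spinX x 1) (p, θ) (v, s)
      = x 1 p * (s * (-Real.sin θ)) + Real.cos θ * fderiv ℝ (x 1) p v := by
    have h := HasFDerivAt.fderiv (f := fun q : E × ℝ => x 1 q.1 * Real.cos q.2) (hX1.mul Hcos)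
    have e : spinX x 1 = fun q : E × ℝ => x 1 q.1 * Real.cos q.2 := rfl
    rw [e, h]; simp [smul_eq_mul]
  have hT : spinT t (p, θ) = t p := rfl
  have hZ : fderiv ℝ (spinZ z) (p, θ) (v, s) = fderiv ℝ z p v := hfst z hz
  -- split the sums
  have h0notin : (0 : ℕ) ∉ Finset.Ioc 0 n := by simp
  have h1notin : (1 : ℕ) ∉ Finset.Ioc 1 n := by simp
  have e0 : Finset.Icc 0 n = insert 0 (Finset.Ioc 0 n) :=
    (Finset.Ioc_insert_left (Nat.zero_le n)).symm
  have e1 : Finset.Icc 1 n = insert 1 (Finset.Ioc 1 n) :=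
    (Finset.Ioc_insert_left hn).symm
  have eIoc0 : Finset.Ioc 0 n = Finset.Icc 1 n := by
    ext i; simp [Nat.lt_iff_add_one_le]
  have eIoc1 : Finset.Ioc 1 n = Finset.Icc 2 n := by
    ext i; simp [Nat.lt_iff_add_one_le]
  have htail : ∀ i ∈ Finset.Icc 2 n,
      spinY y i (p, θ) * fderiv ℝ (spinX x i) (p, θ) (v, s)
        = y i p * fderiv ℝ (x i) p v := by
    intro i hi
    rw [Finset.mem_Icc] at hi
    obtain ⟨k, rfl⟩ := Nat.exists_eq_add_of_le hi.1
    have hk : 2 + k = k + 2 := by omega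
    rw [hk]
    have eX : spinX x (k + 2) = fun q : E × ℝ => x (k + 2) q.1 := rfl
    have eY : spinY y (k + 2) (p, θ) = y (k + 2) p := rfl
    rw [eX, eY, hfst (x (k + 2)) (hx (k + 2) (by rw [Finset.mem_Icc]; omega))]
  have hsumL : ∑ i ∈ Finset.Icc 0 n, spinY y i (p, θ) * fderiv ℝ (spinX x i) (p, θ) (v, s)
      = spinY y 0 (p, θ) * fderiv ℝ (spinX x 0) (p, θ) (v, s)
        + spinY y 1 (p, θ) * fderiv ℝ (spinX x 1) (p, θ) (v, s)
        + ∑ i ∈ Finset.Icc 2 n, y i p * fderiv ℝ (x i) p v := by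
    rw [e0, Finset.sum_insert h0notin, eIoc0, e1, Finset.sum_insert h1notin, eIoc1,
      Finset.sum_congr rfl htail, add_assoc]
  have hsumR : ∑ i ∈ Finset.Icc 1 n, y i p * fderiv ℝ (x i) p v
      = y 1 p * fderiv ℝ (x 1) p v + ∑ i ∈ Finset.Icc 2 n, y i p * fderiv ℝ (x i) p v := by
    rw [e1, Finset.sum_insert h1notin, eIoc1]
  have eY0 : spinY y 0 (p, θ) = y 1 p * Real.sin θ := rfl
  have eY1 : spinY y 1 (p, θ) = y 1 p * Real.cos θ := rfl
  rw [hT, hZ, hsumL, hsumR, hSX0, hSX1, eY0, eY1]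
  have hpyth := Real.sin_sq_add_cos_sq θ
  linear_combination (-(Real.exp (t p) * y 1 p * fderiv ℝ (x 1) p v)) * hpyth
end

section
/- Pullback identity for the symplectization form under front spinning of a cobordism (Formulas (4.7)–(4.8) in the paper): let n ≥ 1, let E be a real normed vector space, and let g : E → ℝ × ℝ^{2n+1} have component functions t, x_1, y_1, …, x_n, y_n, z, each differentiable at p ∈ E. Then for every θ ∈ ℝ and all pairs (v, s), (w, r) ∈ E × ℝ, the symplectization 2-form ω_{n+1} at the point Σg(p,θ), evaluated on the pair of vectors (D(Σg)(p,θ)(v,s), D(Σg)(p,θ)(w,r)), equals the symplectization 2-form ω_n at the point g(p), evaluated on the pair (Dg(p)(v), Dg(p)(w)). -/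
/-- The pullback of the symplectization form `ω = d(e^t α)` under the
parametrization with component functions `t, x_i, y_i (i ∈ S), z`, evaluated
at the point `p` on the pair of tangent vectors `(u, v)`:
`ω` at the image point applied to `(Dg(p)u, Dg(p)v)`. -/
noncomputable def sympPull {F : Type*} [NormedAddCommGroup F] [NormedSpace ℝ F]
    (S : Finset ℕ) (t : F → ℝ) (x y : ℕ → F → ℝ) (z : F → ℝ) (p : F) (u v : F) : ℝ :=
  Real.exp (t p) *
    (fderiv ℝ t p u * (fderiv ℝ z p v - ∑ i ∈ S, y i p * fderiv ℝ (x i) p v) -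
      fderiv ℝ t p v * (fderiv ℝ z p u - ∑ i ∈ S, y i p * fderiv ℝ (x i) p u) -
      ∑ i ∈ S, (fderiv ℝ (y i) p u * fderiv ℝ (x i) p v -
        fderiv ℝ (y i) p v * fderiv ℝ (x i) p u))

section AuxDerivs

variable {E : Type*} [NormedAddCommGroup E] [NormedSpace ℝ E] {f : E → ℝ} {p : E}

private lemma fst_fderiv_apply (hf : DifferentiableAt ℝ f p) (θ s : ℝ) (v : E) :
    fderiv ℝ (fun q : E × ℝ => f q.1) (p, θ) (v, s) = fderiv ℝ f p v := by
  have h : HasFDerivAt (fun q : E × ℝ => f q.1)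
      ((fderiv ℝ f p).comp (ContinuousLinearMap.fst ℝ E ℝ)) (p, θ) :=
    hf.hasFDerivAt.comp _ hasFDerivAt_fst
  rw [h.fderiv]; rfl

private lemma sin_fderiv_apply (hf : DifferentiableAt ℝ f p) (θ s : ℝ) (v : E) :
    fderiv ℝ (fun q : E × ℝ => f q.1 * Real.sin q.2) (p, θ) (v, s)
      = fderiv ℝ f p v * Real.sin θ + f p * (Real.cos θ * s) := by
  have h1 : HasFDerivAt (fun q : E × ℝ => f q.1)
      ((fderiv ℝ f p).comp (ContinuousLinearMap.fst ℝ E ℝ)) (p, θ) :=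
    hf.hasFDerivAt.comp _ hasFDerivAt_fst
  have h2 : HasFDerivAt (fun q : E × ℝ => Real.sin q.2)
      (((1 : ℝ →L[ℝ] ℝ).smulRight (Real.cos θ)).comp (ContinuousLinearMap.snd ℝ E ℝ)) (p, θ) :=
    by
      have := (Real.hasDerivAt_sin θ).hasFDerivAt.comp (p, θ) (hasFDerivAt_snd (p := (p, θ)) (𝕜 := ℝ) (E := E))
      refine this.congr_fderiv ?_
      ext <;> simp
  rw [show (fun q : E × ℝ => f q.1 * Real.sin q.2) = (fun q : E × ℝ => f q.1) * (fun q : E × ℝ => Real.sin q.2) from rfl, (h1.mul h2).fderiv]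
  simp [smul_eq_mul]
  ring

private lemma cos_fderiv_apply (hf : DifferentiableAt ℝ f p) (θ s : ℝ) (v : E) :
    fderiv ℝ (fun q : E × ℝ => f q.1 * Real.cos q.2) (p, θ) (v, s)
      = fderiv ℝ f p v * Real.cos θ - f p * (Real.sin θ * s) := by
  have h1 : HasFDerivAt (fun q : E × ℝ => f q.1)
      ((fderiv ℝ f p).comp (ContinuousLinearMap.fst ℝ E ℝ)) (p, θ) :=
    hf.hasFDerivAt.comp _ hasFDerivAt_fst
  have h2 : HasFDerivAt (fun q : E × ℝ => Real.cos q.2)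
      (((1 : ℝ →L[ℝ] ℝ).smulRight (-Real.sin θ)).comp (ContinuousLinearMap.snd ℝ E ℝ)) (p, θ) :=
    by
      have := (Real.hasDerivAt_cos θ).hasFDerivAt.comp (p, θ) (hasFDerivAt_snd (p := (p, θ)) (𝕜 := ℝ) (E := E))
      refine this.congr_fderiv ?_
      ext <;> simp
  rw [show (fun q : E × ℝ => f q.1 * Real.cos q.2) = (fun q : E × ℝ => f q.1) * (fun q : E × ℝ => Real.cos q.2) from rfl, (h1.mul h2).fderiv]
  simp [smul_eq_mul]
  ring

end AuxDerivs

/-- **Pullback identity for the symplectization form under front spinning**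
(Formulas (4.7)–(4.8) in the paper). If the component functions of
`g : E → ℝ × ℝ^{2n+1}` are differentiable at `p`, then for every `θ` and all
pairs `(v,s), (w,r) ∈ E × ℝ` the form `ω_{n+1}` at `Σg(p,θ)` evaluated on
`(D(Σg)(p,θ)(v,s), D(Σg)(p,θ)(w,r))` equals `ω_n` at `g(p)` evaluated on
`(Dg(p)(v), Dg(p)(w))`. -/
theorem front_spinning_symplectization_form_pullback
    {E : Type*} [NormedAddCommGroup E] [NormedSpace ℝ E]
    (n : ℕ) (hn : 1 ≤ n) (t : E → ℝ) (x y : ℕ → E → ℝ) (z : E → ℝ) (p : E)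
    (ht : DifferentiableAt ℝ t p)
    (hx : ∀ i ∈ Finset.Icc 1 n, DifferentiableAt ℝ (x i) p)
    (hy : ∀ i ∈ Finset.Icc 1 n, DifferentiableAt ℝ (y i) p)
    (hz : DifferentiableAt ℝ z p) :
    ∀ (θ : ℝ) (v w : E) (s r : ℝ),
      sympPull (Finset.Icc 0 n) (spinT t) (spinX x) (spinY y) (spinZ z)
          (p, θ) (v, s) (w, r) =
        sympPull (Finset.Icc 1 n) t x y z p v w := by
  intro θ v w s r
  have h1n : (1 : ℕ) ∈ Finset.Icc 1 n := by simp [hn]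
  have hx1 := hx 1 h1n
  have hy1 := hy 1 h1n
  have e0 : Finset.Icc 0 n = insert 0 (insert 1 (Finset.Icc 2 n)) := by
    ext i; simp [Finset.mem_Icc]; omega
  have e1 : Finset.Icc 1 n = insert 1 (Finset.Icc 2 n) := by
    ext i; simp [Finset.mem_Icc]; omega
  have m0 : (0 : ℕ) ∉ insert 1 (Finset.Icc 2 n) := by simp
  have m1 : (1 : ℕ) ∉ Finset.Icc 2 n := by simp
  -- values and derivatives of high-index spun components
  have hXval : ∀ i ∈ Finset.Icc 2 n, ∀ (u : E) (c : ℝ),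
      fderiv ℝ (spinX x i) (p, θ) (u, c) = fderiv ℝ (x i) p u := by
    intro i hi u c
    simp only [Finset.mem_Icc] at hi
    obtain ⟨k, rfl⟩ : ∃ k, i = k + 2 := ⟨i - 2, by omega⟩
    have : spinX x (k + 2) = fun q : E × ℝ => x (k + 2) q.1 := rfl
    rw [this, fst_fderiv_apply (hx _ (by simp [Finset.mem_Icc]; omega))]
  have hYval : ∀ i ∈ Finset.Icc 2 n, ∀ (u : E) (c : ℝ),
      fderiv ℝ (spinY y i) (p, θ) (u, c) = fderiv ℝ (y i) p u := by
    intro i hi u c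
    simp only [Finset.mem_Icc] at hi
    obtain ⟨k, rfl⟩ : ∃ k, i = k + 2 := ⟨i - 2, by omega⟩
    have : spinY y (k + 2) = fun q : E × ℝ => y (k + 2) q.1 := rfl
    rw [this, fst_fderiv_apply (hy _ (by simp [Finset.mem_Icc]; omega))]
  have hYpt : ∀ i ∈ Finset.Icc 2 n, spinY y i (p, θ) = y i p := by
    intro i hi
    simp only [Finset.mem_Icc] at hi
    obtain ⟨k, rfl⟩ : ∃ k, i = k + 2 := ⟨i - 2, by omega⟩
    rfl
  -- rewrite the three sums over Icc 2 n
  have hs1 : ∀ (u : E) (c : ℝ),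
      ∑ i ∈ Finset.Icc 2 n, spinY y i (p, θ) * fderiv ℝ (spinX x i) (p, θ) (u, c)
        = ∑ i ∈ Finset.Icc 2 n, y i p * fderiv ℝ (x i) p u := by
    intro u c
    refine Finset.sum_congr rfl fun i hi => ?_
    rw [hYpt i hi, hXval i hi]
  have hs2 : ∑ i ∈ Finset.Icc 2 n,
        (fderiv ℝ (spinY y i) (p, θ) (v, s) * fderiv ℝ (spinX x i) (p, θ) (w, r) -
          fderiv ℝ (spinY y i) (p, θ) (w, r) * fderiv ℝ (spinX x i) (p, θ) (v, s))
      = ∑ i ∈ Finset.Icc 2 n,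
        (fderiv ℝ (y i) p v * fderiv ℝ (x i) p w -
          fderiv ℝ (y i) p w * fderiv ℝ (x i) p v) := by
    refine Finset.sum_congr rfl fun i hi => ?_
    rw [hYval i hi, hYval i hi, hXval i hi, hXval i hi]
  rw [sympPull, sympPull, e0, e1,
    Finset.sum_insert m0, Finset.sum_insert m1,
    Finset.sum_insert m0, Finset.sum_insert m1,
    Finset.sum_insert m0, Finset.sum_insert m1,
    Finset.sum_insert m1, Finset.sum_insert m1, Finset.sum_insert m1,
    hs1 v s, hs1 w r, hs2]
  have eX0 : spinX x 0 = fun q : E × ℝ => x 1 q.1 * Real.sin q.2 := rfl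
  have eX1 : spinX x 1 = fun q : E × ℝ => x 1 q.1 * Real.cos q.2 := rfl
  have eY0 : spinY y 0 = fun q : E × ℝ => y 1 q.1 * Real.sin q.2 := rfl
  have eY1 : spinY y 1 = fun q : E × ℝ => y 1 q.1 * Real.cos q.2 := rfl
  have eT : spinT t = fun q : E × ℝ => t q.1 := rfl
  have eZ : spinZ z = fun q : E × ℝ => z q.1 := rfl
  rw [eX0, eX1, eY0, eY1, eT, eZ]
  simp only [
    fst_fderiv_apply ht θ s v, fst_fderiv_apply ht θ r w,
    fst_fderiv_apply hz θ s v, fst_fderiv_apply hz θ r w,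
    sin_fderiv_apply hx1 θ s v, sin_fderiv_apply hx1 θ r w,
    cos_fderiv_apply hx1 θ s v, cos_fderiv_apply hx1 θ r w,
    sin_fderiv_apply hy1 θ s v, sin_fderiv_apply hy1 θ r w,
    cos_fderiv_apply hy1 θ s v, cos_fderiv_apply hy1 θ r w]
  have hsc := Real.sin_sq_add_cos_sq θ
  linear_combination
    (Real.exp (t p) *
      (fderiv ℝ t p w * (y 1 p * fderiv ℝ (x 1) p v) -
        fderiv ℝ t p v * (y 1 p * fderiv ℝ (x 1) p w) -
        (fderiv ℝ (y 1) p v * fderiv ℝ (x 1) p w -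
          fderiv ℝ (y 1) p w * fderiv ℝ (x 1) p v))) * hsc
end

section
/- Front spinning preserves the Lagrangian condition (part of Proposition 1.4): let n ≥ 1, let E be a real normed vector space, and let g : E → ℝ × ℝ^{2n+1} have differentiable component functions t, x_1, y_1, …, x_n, y_n, z such that the pullback of ω_n under g vanishes, i.e., ω_n at g(p) evaluated on (Dg(p)(v), Dg(p)(w)) is 0 for all p ∈ E and v, w ∈ E. Then the pullback of ω_{n+1} under the front-spun map Σg vanishes: ω_{n+1} at Σg(p,θ) evaluated on (D(Σg)(p,θ)(v,s), D(Σg)(p,θ)(w,r)) is 0 for all (p,θ) ∈ E × ℝ and all (v,s), (w,r) ∈ E × ℝ. -/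
lemma fderiv_fst_apply' {E : Type*} [NormedAddCommGroup E] [NormedSpace ℝ E]
    (f : E → ℝ) (p : E) (θ : ℝ) (v : E) (s : ℝ) (hf : DifferentiableAt ℝ f p) :
    fderiv ℝ (fun q : E × ℝ => f q.1) (p, θ) (v, s) = fderiv ℝ f p v := by
  have h : HasFDerivAt (fun q : E × ℝ => f q.1)
      ((fderiv ℝ f p).comp (ContinuousLinearMap.fst ℝ E ℝ)) (p, θ) :=
    hf.hasFDerivAt.comp (p, θ) hasFDerivAt_fst
  rw [h.fderiv]; rfl

lemma fderiv_mul_snd_apply' {E : Type*} [NormedAddCommGroup E] [NormedSpace ℝ E]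
    (f : E → ℝ) (g : ℝ → ℝ) (g' : ℝ) (p : E) (θ : ℝ) (v : E) (s : ℝ)
    (hf : DifferentiableAt ℝ f p) (hg : HasDerivAt g g' θ) :
    fderiv ℝ (fun q : E × ℝ => f q.1 * g q.2) (p, θ) (v, s)
      = fderiv ℝ f p v * g θ + f p * (g' * s) := by
  have h1 : HasFDerivAt (fun q : E × ℝ => f q.1)
      ((fderiv ℝ f p).comp (ContinuousLinearMap.fst ℝ E ℝ)) (p, θ) :=
    hf.hasFDerivAt.comp (p, θ) hasFDerivAt_fst
  have h2 : HasFDerivAt (fun q : E × ℝ => g q.2)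
      (g' • ContinuousLinearMap.snd ℝ E ℝ) (p, θ) :=
    hg.comp_hasFDerivAt (p, θ) hasFDerivAt_snd
  have h := h1.mul h2
  rw [(show HasFDerivAt (fun q : E × ℝ => f q.1 * g q.2) _ (p, θ) from h).fderiv]
  simp
  ring



/-- **Front spinning preserves the Lagrangian condition.**
If `g : E → ℝ × ℝ^{2n+1}` has differentiable component functions and the
pullback of `ω_n` under `g` vanishes, then the pullback of `ω_{n+1}` under
the front-spun map `Σg` vanishes. -/
theorem front_spinning_preserves_lagrangian
    {E : Type*} [NormedAddCommGroup E] [NormedSpace ℝ E]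
    (n : ℕ) (hn : 1 ≤ n) (t : E → ℝ) (x y : ℕ → E → ℝ) (z : E → ℝ)
    (ht : Differentiable ℝ t)
    (hx : ∀ i ∈ Finset.Icc 1 n, Differentiable ℝ (x i))
    (hy : ∀ i ∈ Finset.Icc 1 n, Differentiable ℝ (y i))
    (hz : Differentiable ℝ z)
    (hlag : ∀ (p : E) (v w : E), sympPull (Finset.Icc 1 n) t x y z p v w = 0) :
    ∀ (p : E) (θ : ℝ) (v w : E) (s r : ℝ),
      sympPull (Finset.Icc 0 n) (spinT t) (spinX x) (spinY y) (spinZ z)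
        (p, θ) (v, s) (w, r) = 0 := by
  intro p θ v w s r
  have hx1 : Differentiable ℝ (x 1) := hx 1 (Finset.mem_Icc.mpr ⟨le_rfl, hn⟩)
  have hy1 : Differentiable ℝ (y 1) := hy 1 (Finset.mem_Icc.mpr ⟨le_rfl, hn⟩)
  have hIcc0 : Finset.Icc 0 n = insert 0 (insert 1 (Finset.Icc 2 n)) := by
    ext i; simp [Finset.mem_Icc]; omega
  have hIcc1 : Finset.Icc 1 n = insert 1 (Finset.Icc 2 n) := by
    ext i; simp [Finset.mem_Icc]; omega
  have h0 : (0 : ℕ) ∉ insert 1 (Finset.Icc 2 n) := by simp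
  have h1 : (1 : ℕ) ∉ Finset.Icc 2 n := by simp
  -- derivatives of the spun components
  have dX0 : ∀ (u : E) (c : ℝ), fderiv ℝ (spinX x 0) (p, θ) (u, c)
      = fderiv ℝ (x 1) p u * Real.sin θ + x 1 p * (Real.cos θ * c) := by
    intro u c
    simp only [spinX]
    exact fderiv_mul_snd_apply' _ _ _ _ _ _ _ (hx1 p) (Real.hasDerivAt_sin θ)
  have dX1 : ∀ (u : E) (c : ℝ), fderiv ℝ (spinX x 1) (p, θ) (u, c)
      = fderiv ℝ (x 1) p u * Real.cos θ + x 1 p * (-Real.sin θ * c) := by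
    intro u c
    simp only [spinX]
    exact fderiv_mul_snd_apply' _ _ _ _ _ _ _ (hx1 p) (Real.hasDerivAt_cos θ)
  have dY0 : ∀ (u : E) (c : ℝ), fderiv ℝ (spinY y 0) (p, θ) (u, c)
      = fderiv ℝ (y 1) p u * Real.sin θ + y 1 p * (Real.cos θ * c) := by
    intro u c
    simp only [spinY]
    exact fderiv_mul_snd_apply' _ _ _ _ _ _ _ (hy1 p) (Real.hasDerivAt_sin θ)
  have dY1 : ∀ (u : E) (c : ℝ), fderiv ℝ (spinY y 1) (p, θ) (u, c)
      = fderiv ℝ (y 1) p u * Real.cos θ + y 1 p * (-Real.sin θ * c) := by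
    intro u c
    simp only [spinY]
    exact fderiv_mul_snd_apply' _ _ _ _ _ _ _ (hy1 p) (Real.hasDerivAt_cos θ)
  have hpyth := Real.sin_sq_add_cos_sq θ
  -- the "α-part" sums agree
  have keysum : ∀ (u : E) (c : ℝ),
      (∑ i ∈ Finset.Icc 0 n, spinY y i (p, θ) * fderiv ℝ (spinX x i) (p, θ) (u, c))
        = ∑ i ∈ Finset.Icc 1 n, y i p * fderiv ℝ (x i) p u := by
    intro u c
    rw [hIcc0, Finset.sum_insert h0, Finset.sum_insert h1, hIcc1, Finset.sum_insert h1]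
    have rest : (∑ i ∈ Finset.Icc 2 n, spinY y i (p, θ) * fderiv ℝ (spinX x i) (p, θ) (u, c))
        = ∑ i ∈ Finset.Icc 2 n, y i p * fderiv ℝ (x i) p u := by
      refine Finset.sum_congr rfl fun i hi => ?_
      obtain ⟨hi2, hin⟩ := Finset.mem_Icc.mp hi
      obtain ⟨k, rfl⟩ : ∃ k, i = k + 2 := ⟨i - 2, by omega⟩
      have hxi : Differentiable ℝ (x (k + 2)) :=
        hx (k + 2) (Finset.mem_Icc.mpr ⟨by omega, hin⟩)
      simp only [spinX, spinY]
      rw [fderiv_fst_apply' _ _ _ _ _ (hxi p)]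
    rw [rest, dX0 u c, dX1 u c]
    simp only [spinY]
    linear_combination (y 1 p * fderiv ℝ (x 1) p u) * hpyth
  -- the cross-term sums agree
  have crosssum :
      (∑ i ∈ Finset.Icc 0 n,
          (fderiv ℝ (spinY y i) (p, θ) (v, s) * fderiv ℝ (spinX x i) (p, θ) (w, r) -
            fderiv ℝ (spinY y i) (p, θ) (w, r) * fderiv ℝ (spinX x i) (p, θ) (v, s)))
        = ∑ i ∈ Finset.Icc 1 n,
            (fderiv ℝ (y i) p v * fderiv ℝ (x i) p w -
              fderiv ℝ (y i) p w * fderiv ℝ (x i) p v) := by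
    rw [hIcc0, Finset.sum_insert h0, Finset.sum_insert h1, hIcc1, Finset.sum_insert h1]
    have rest : (∑ i ∈ Finset.Icc 2 n,
          (fderiv ℝ (spinY y i) (p, θ) (v, s) * fderiv ℝ (spinX x i) (p, θ) (w, r) -
            fderiv ℝ (spinY y i) (p, θ) (w, r) * fderiv ℝ (spinX x i) (p, θ) (v, s)))
        = ∑ i ∈ Finset.Icc 2 n,
            (fderiv ℝ (y i) p v * fderiv ℝ (x i) p w -
              fderiv ℝ (y i) p w * fderiv ℝ (x i) p v) := by
      refine Finset.sum_congr rfl fun i hi => ?_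
      obtain ⟨hi2, hin⟩ := Finset.mem_Icc.mp hi
      obtain ⟨k, rfl⟩ : ∃ k, i = k + 2 := ⟨i - 2, by omega⟩
      have hxi : Differentiable ℝ (x (k + 2)) :=
        hx (k + 2) (Finset.mem_Icc.mpr ⟨by omega, hin⟩)
      have hyi : Differentiable ℝ (y (k + 2)) :=
        hy (k + 2) (Finset.mem_Icc.mpr ⟨by omega, hin⟩)
      simp only [spinX, spinY]
      rw [fderiv_fst_apply' _ _ _ _ _ (hxi p), fderiv_fst_apply' _ _ _ _ _ (hxi p),
        fderiv_fst_apply' _ _ _ _ _ (hyi p), fderiv_fst_apply' _ _ _ _ _ (hyi p)]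
    rw [rest, dX0 v s, dX0 w r, dX1 v s, dX1 w r, dY0 v s, dY0 w r, dY1 v s, dY1 w r]
    linear_combination (fderiv ℝ (y 1) p v * fderiv ℝ (x 1) p w -
      fderiv ℝ (y 1) p w * fderiv ℝ (x 1) p v) * hpyth
  have dT : ∀ (u : E) (c : ℝ), fderiv ℝ (spinT t) (p, θ) (u, c) = fderiv ℝ t p u := by
    intro u c
    exact fderiv_fst_apply' t p θ u c (ht p)
  have dZ : ∀ (u : E) (c : ℝ), fderiv ℝ (spinZ z) (p, θ) (u, c) = fderiv ℝ z p u := by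
    intro u c
    exact fderiv_fst_apply' z p θ u c (hz p)
  have := hlag p v w
  simp only [sympPull] at this ⊢
  rw [keysum v s, keysum w r, crosssum, dT v s, dT w r, dZ v s, dZ w r]
  simpa [spinT] using this
end

section
/- Front spinning preserves exactness (part of Proposition 1.4, Formula (4.10) in the paper): let n ≥ 1, let E be a real normed vector space, and let g : E → ℝ × ℝ^{2n+1} have differentiable component functions t, x_1, y_1, …, x_n, y_n, z. Suppose there exists a differentiable function h : E → ℝ with Dh(p)(v) = e^{t(p)}·(Dz(p)(v) − Σ_{i=1}^{n} y_i(p)·Dx_i(p)(v)) for all p ∈ E and v ∈ E (i.e., dh = g*(e^t α_n)). Then the function H : E × ℝ → ℝ defined by H(p, θ) := h(p) is differentiable and satisfies DH(p,θ)(v,s) = e^{T(p,θ)}·(DZ(p,θ)(v,s) − Σ_{i=0}^{n} Y_i(p,θ)·DX_i(p,θ)(v,s)) for all (p,θ) and (v,s), where (T, X_0, Y_0, …, X_n, Y_n, Z) are the component functions of Σg; that is, dH = (Σg)*(e^t α_{n+1}), so the front spinning of an exact Lagrangian parametrization is exact. -/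
section Helpers

variable {E : Type*} [NormedAddCommGroup E] [NormedSpace ℝ E]

lemma hasFDerivAt_comp_fst (f : E → ℝ) {p : E} (hf : DifferentiableAt ℝ f p) (θ : ℝ) :
    HasFDerivAt (fun q : E × ℝ => f q.1)
      ((fderiv ℝ f p).comp (ContinuousLinearMap.fst ℝ E ℝ)) (p, θ) :=
  hf.hasFDerivAt.comp (p, θ) hasFDerivAt_fst

lemma fderiv_comp_fst_apply (f : E → ℝ) {p : E} (hf : DifferentiableAt ℝ f p)
    (θ : ℝ) (v : E) (s : ℝ) :
    fderiv ℝ (fun q : E × ℝ => f q.1) (p, θ) (v, s) = fderiv ℝ f p v := by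
  rw [(hasFDerivAt_comp_fst f hf θ).fderiv]; rfl

lemma fderiv_mul_sin_apply (f : E → ℝ) {p : E} (hf : DifferentiableAt ℝ f p)
    (θ : ℝ) (v : E) (s : ℝ) :
    fderiv ℝ (fun q : E × ℝ => f q.1 * Real.sin q.2) (p, θ) (v, s) =
      fderiv ℝ f p v * Real.sin θ + f p * (Real.cos θ * s) := by
  have h1 := hasFDerivAt_comp_fst f hf θ
  have h2 : HasFDerivAt (fun q : E × ℝ => Real.sin q.2)
      (((1 : ℝ →L[ℝ] ℝ).smulRight (Real.cos θ)).comp (ContinuousLinearMap.snd ℝ E ℝ))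
      (p, θ) :=
    HasFDerivAt.comp (f := Prod.snd) (p, θ) (Real.hasDerivAt_sin θ).hasFDerivAt hasFDerivAt_snd
  rw [HasFDerivAt.fderiv (f := fun q : E × ℝ => f q.1 * Real.sin q.2) (h1.mul h2)]
  simp [ContinuousLinearMap.smulRight_apply]
  ring

lemma fderiv_mul_cos_apply (f : E → ℝ) {p : E} (hf : DifferentiableAt ℝ f p)
    (θ : ℝ) (v : E) (s : ℝ) :
    fderiv ℝ (fun q : E × ℝ => f q.1 * Real.cos q.2) (p, θ) (v, s) =
      fderiv ℝ f p v * Real.cos θ - f p * (Real.sin θ * s) := by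
  have h1 := hasFDerivAt_comp_fst f hf θ
  have h2 : HasFDerivAt (fun q : E × ℝ => Real.cos q.2)
      (((1 : ℝ →L[ℝ] ℝ).smulRight (-Real.sin θ)).comp (ContinuousLinearMap.snd ℝ E ℝ))
      (p, θ) :=
    HasFDerivAt.comp (f := Prod.snd) (p, θ) (Real.hasDerivAt_cos θ).hasFDerivAt hasFDerivAt_snd
  rw [HasFDerivAt.fderiv (f := fun q : E × ℝ => f q.1 * Real.cos q.2) (h1.mul h2)]
  simp [ContinuousLinearMap.smulRight_apply]
  ring

end Helpers

/-- **Front spinning preserves exactness** (Formula (4.10) in the paper).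
If `g : E → ℝ × ℝ^{2n+1}` has differentiable component functions and there is
a differentiable `h : E → ℝ` with `dh = g^*(e^t α_n)`, then
`H(p, θ) := h(p)` is differentiable and `dH = (Σg)^*(e^t α_{n+1})`:
`DH(p,θ)(v,s) = e^{T(p,θ)}·(DZ(p,θ)(v,s) − Σ_{i=0}^{n} Y_i(p,θ)·DX_i(p,θ)(v,s))`. -/
theorem front_spinning_preserves_exactness
    {E : Type*} [NormedAddCommGroup E] [NormedSpace ℝ E]
    (n : ℕ) (hn : 1 ≤ n) (t : E → ℝ) (x y : ℕ → E → ℝ) (z : E → ℝ)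
    (ht : Differentiable ℝ t)
    (hx : ∀ i ∈ Finset.Icc 1 n, Differentiable ℝ (x i))
    (hy : ∀ i ∈ Finset.Icc 1 n, Differentiable ℝ (y i))
    (hz : Differentiable ℝ z)
    (h : E → ℝ) (hh : Differentiable ℝ h)
    (hprim : ∀ (p : E) (v : E),
      fderiv ℝ h p v =
        Real.exp (t p) *
          (fderiv ℝ z p v - ∑ i ∈ Finset.Icc 1 n, y i p * fderiv ℝ (x i) p v)) :
    Differentiable ℝ (fun q : E × ℝ => h q.1) ∧
    ∀ (p : E) (θ : ℝ) (v : E) (s : ℝ),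
      fderiv ℝ (fun q : E × ℝ => h q.1) (p, θ) (v, s) =
        Real.exp (spinT t (p, θ)) *
          (fderiv ℝ (spinZ z) (p, θ) (v, s) -
            ∑ i ∈ Finset.Icc 0 n, spinY y i (p, θ) * fderiv ℝ (spinX x i) (p, θ) (v, s)) := by
  constructor
  · exact hh.comp differentiable_fst
  intro p θ v s
  have h1n : (1 : ℕ) ∈ Finset.Icc 1 n := by simp [hn]
  have hx1 : DifferentiableAt ℝ (x 1) p := (hx 1 h1n) p
  have hZ : fderiv ℝ (spinZ z) (p, θ) (v, s) = fderiv ℝ z p v :=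
    fderiv_comp_fst_apply z (hz p) θ v s
  have hsum :
      ∑ i ∈ Finset.Icc 0 n, spinY y i (p, θ) * fderiv ℝ (spinX x i) (p, θ) (v, s)
        = ∑ i ∈ Finset.Icc 1 n, y i p * fderiv ℝ (x i) p v := by
    have hsplit0 : Finset.Icc 0 n = insert 0 (Finset.Icc 1 n) := by
      ext i; simp; omega
    have hsplit1 : Finset.Icc 1 n = insert 1 (Finset.Icc 2 n) := by
      ext i; simp; omega
    rw [hsplit0, Finset.sum_insert (by simp), hsplit1, Finset.sum_insert (by simp)]
    have e0 : fderiv ℝ (spinX x 0) (p, θ) (v, s)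
        = fderiv ℝ (x 1) p v * Real.sin θ + x 1 p * (Real.cos θ * s) :=
      fderiv_mul_sin_apply (x 1) hx1 θ v s
    have e1 : fderiv ℝ (spinX x 1) (p, θ) (v, s)
        = fderiv ℝ (x 1) p v * Real.cos θ - x 1 p * (Real.sin θ * s) :=
      fderiv_mul_cos_apply (x 1) hx1 θ v s
    have etail :
        ∑ i ∈ Finset.Icc 2 n, spinY y i (p, θ) * fderiv ℝ (spinX x i) (p, θ) (v, s)
          = ∑ i ∈ Finset.Icc 2 n, y i p * fderiv ℝ (x i) p v := by
      refine Finset.sum_congr rfl fun i hi => ?_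
      obtain ⟨hi1, hi2⟩ := Finset.mem_Icc.mp hi
      obtain ⟨j, rfl⟩ : ∃ j, i = j + 2 := ⟨i - 2, by omega⟩
      have hmem : j + 2 ∈ Finset.Icc 1 n := Finset.mem_Icc.mpr ⟨by omega, hi2⟩
      have hxj : DifferentiableAt ℝ (x (j + 2)) p := (hx (j + 2) hmem) p
      have hX : spinX x (j + 2) = fun q : E × ℝ => x (j + 2) q.1 := rfl
      have hY : spinY y (j + 2) (p, θ) = y (j + 2) p := rfl
      rw [hX, hY, fderiv_comp_fst_apply _ hxj]
    rw [e0, e1, etail]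
    have hsY0 : spinY y 0 (p, θ) = y 1 p * Real.sin θ := rfl
    have hsY1 : spinY y 1 (p, θ) = y 1 p * Real.cos θ := rfl
    rw [hsY0, hsY1]
    rw [Finset.sum_insert (by simp)]
    have hsc := Real.sin_sq_add_cos_sq θ
    linear_combination (y 1 p * fderiv ℝ (x 1) p v) * hsc
  have hT : spinT t (p, θ) = t p := rfl
  rw [fderiv_comp_fst_apply h (hh p) θ v s, hprim, hZ, hsum, hT]
end

section
/- Front spinning of a cobordism preserves immersions (from the proof of Proposition 1.4): let n ≥ 1, let E be a real normed vector space, and let g : E → ℝ × ℝ^{2n+1} have component functions t, x_1, y_1, …, x_n, y_n, z, each differentiable at p ∈ E. If the derivative Dg(p) : E → ℝ × ℝ^{2n+1} is injective and x_1(p) ≠ 0, then for every θ ∈ ℝ the derivative D(Σg)(p,θ) : E × ℝ → ℝ × ℝ^{2n+3} of the front-spun map is injective. -/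
/-- The map `g : E → ℝ × ℝ^{2n+1}` bundled from its component functions
`t, x_1, …, x_n, y_1, …, y_n, z`. -/
def bundleCob {E : Type*} (n : ℕ) (t : E → ℝ) (x y : ℕ → E → ℝ) (z : E → ℝ) :
    E → ℝ × (Fin n → ℝ) × (Fin n → ℝ) × ℝ :=
  fun p => (t p, fun i => x ((i : ℕ) + 1) p, fun i => y ((i : ℕ) + 1) p, z p)

/-- The front-spun map `Σg : E × ℝ → ℝ × ℝ^{2n+3}` bundled from its component
functions `T, X_0, …, X_n, Y_0, …, Y_n, Z`. -/
noncomputable def spinBundleCob {E : Type*} (n : ℕ) (t : E → ℝ) (x y : ℕ → E → ℝ)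
    (z : E → ℝ) : E × ℝ → ℝ × (Fin (n + 1) → ℝ) × (Fin (n + 1) → ℝ) × ℝ :=
  fun q => (spinT t q, fun i => spinX x (i : ℕ) q, fun i => spinY y (i : ℕ) q, spinZ z q)

open ContinuousLinearMap in
/-- Derivative family of the spun coordinate functions. -/
noncomputable def dSpin {E : Type*} [NormedAddCommGroup E] [NormedSpace ℝ E]
    (dx : ℕ → E →L[ℝ] ℝ) (a θ : ℝ) : ℕ → (E × ℝ →L[ℝ] ℝ)
  | 0 => a • (((1 : ℝ →L[ℝ] ℝ).smulRight (Real.cos θ)).comp (ContinuousLinearMap.snd ℝ E ℝ))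
      + Real.sin θ • ((dx 1).comp (ContinuousLinearMap.fst ℝ E ℝ))
  | 1 => a • (((1 : ℝ →L[ℝ] ℝ).smulRight (-Real.sin θ)).comp (ContinuousLinearMap.snd ℝ E ℝ))
      + Real.cos θ • ((dx 1).comp (ContinuousLinearMap.fst ℝ E ℝ))
  | (k + 2) => (dx (k + 2)).comp (ContinuousLinearMap.fst ℝ E ℝ)


open ContinuousLinearMap in
/-- **Front spinning of a cobordism preserves immersions.**
If the component functions of `g` are differentiable at `p`, the derivative
`Dg(p) : E → ℝ × ℝ^{2n+1}` is injective and `x_1(p) ≠ 0`, then for every `θ`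
the derivative `D(Σg)(p,θ) : E × ℝ → ℝ × ℝ^{2n+3}` is injective. -/
theorem front_spinning_cobordism_preserves_immersion
    {E : Type*} [NormedAddCommGroup E] [NormedSpace ℝ E]
    (n : ℕ) (hn : 1 ≤ n) (t : E → ℝ) (x y : ℕ → E → ℝ) (z : E → ℝ) (p : E)
    (ht : DifferentiableAt ℝ t p)
    (hx : ∀ i ∈ Finset.Icc 1 n, DifferentiableAt ℝ (x i) p)
    (hy : ∀ i ∈ Finset.Icc 1 n, DifferentiableAt ℝ (y i) p)
    (hz : DifferentiableAt ℝ z p)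
    (hinj : Function.Injective (fderiv ℝ (bundleCob n t x y z) p))
    (hx1 : x 1 p ≠ 0) :
    ∀ θ : ℝ, Function.Injective (fderiv ℝ (spinBundleCob n t x y z) (p, θ)) := by
  intro θ
  -- derivative of bundleCob
  have hxd : ∀ i : Fin n, HasFDerivAt (x ((i : ℕ) + 1)) (fderiv ℝ (x ((i : ℕ) + 1)) p) p :=
    fun i => (hx _ (Finset.mem_Icc.2 ⟨by omega, by omega⟩)).hasFDerivAt
  have hyd : ∀ i : Fin n, HasFDerivAt (y ((i : ℕ) + 1)) (fderiv ℝ (y ((i : ℕ) + 1)) p) p :=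
    fun i => (hy _ (Finset.mem_Icc.2 ⟨by omega, by omega⟩)).hasFDerivAt
  have hbundle : HasFDerivAt (bundleCob n t x y z)
      ((fderiv ℝ t p).prod
        ((pi fun i : Fin n => fderiv ℝ (x ((i : ℕ) + 1)) p).prod
          ((pi fun i : Fin n => fderiv ℝ (y ((i : ℕ) + 1)) p).prod (fderiv ℝ z p)))) p :=
    HasFDerivAt.prodMk ht.hasFDerivAt (HasFDerivAt.prodMk (hasFDerivAt_pi.2 hxd)
      (HasFDerivAt.prodMk (hasFDerivAt_pi.2 hyd) hz.hasFDerivAt))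
  -- derivatives of the spun map's component pieces
  have hx1d : DifferentiableAt ℝ (x 1) p := hx 1 (Finset.mem_Icc.2 ⟨le_refl 1, hn⟩)
  have hy1d : DifferentiableAt ℝ (y 1) p := hy 1 (Finset.mem_Icc.2 ⟨le_refl 1, hn⟩)
  have hsin : HasFDerivAt (fun q : E × ℝ => Real.sin q.2)
      (((1 : ℝ →L[ℝ] ℝ).smulRight (Real.cos θ)).comp (ContinuousLinearMap.snd ℝ E ℝ)) (p, θ) :=
    HasFDerivAt.comp (p, θ) (g := Real.sin) (Real.hasDerivAt_sin θ).hasFDerivAt hasFDerivAt_snd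
  have hcos : HasFDerivAt (fun q : E × ℝ => Real.cos q.2)
      (((1 : ℝ →L[ℝ] ℝ).smulRight (-Real.sin θ)).comp (ContinuousLinearMap.snd ℝ E ℝ)) (p, θ) :=
    HasFDerivAt.comp (p, θ) (g := Real.cos) (Real.hasDerivAt_cos θ).hasFDerivAt hasFDerivAt_snd
  have hX : ∀ i : Fin (n + 1), HasFDerivAt (fun q => spinX x (i : ℕ) q)
      (dSpin (fun j => fderiv ℝ (x j) p) (x 1 p) θ (i : ℕ)) (p, θ) := by
    rintro ⟨iv, hiv⟩
    match iv, hiv with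
    | 0, _ =>
      exact (HasFDerivAt.comp (p, θ) (f := Prod.fst) hx1d.hasFDerivAt hasFDerivAt_fst).mul hsin
    | 1, _ =>
      exact (HasFDerivAt.comp (p, θ) (f := Prod.fst) hx1d.hasFDerivAt hasFDerivAt_fst).mul hcos
    | (k + 2), hiv =>
      exact (HasFDerivAt.comp (p, θ) (f := Prod.fst) (hx (k + 2) (Finset.mem_Icc.2 ⟨by omega, by omega⟩)).hasFDerivAt
        hasFDerivAt_fst)
  have hY : ∀ i : Fin (n + 1), HasFDerivAt (fun q => spinY y (i : ℕ) q)
      (dSpin (fun j => fderiv ℝ (y j) p) (y 1 p) θ (i : ℕ)) (p, θ) := by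
    rintro ⟨iv, hiv⟩
    match iv, hiv with
    | 0, _ =>
      exact (HasFDerivAt.comp (p, θ) (f := Prod.fst) hy1d.hasFDerivAt hasFDerivAt_fst).mul hsin
    | 1, _ =>
      exact (HasFDerivAt.comp (p, θ) (f := Prod.fst) hy1d.hasFDerivAt hasFDerivAt_fst).mul hcos
    | (k + 2), hiv =>
      exact (HasFDerivAt.comp (p, θ) (f := Prod.fst) (hy (k + 2) (Finset.mem_Icc.2 ⟨by omega, by omega⟩)).hasFDerivAt
        hasFDerivAt_fst)
  have hspun : HasFDerivAt (spinBundleCob n t x y z)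
      (((fderiv ℝ t p).comp (ContinuousLinearMap.fst ℝ E ℝ)).prod
        ((pi fun i : Fin (n + 1) => dSpin (fun j => fderiv ℝ (x j) p) (x 1 p) θ (i : ℕ)).prod
          ((pi fun i : Fin (n + 1) => dSpin (fun j => fderiv ℝ (y j) p) (y 1 p) θ (i : ℕ)).prod
            ((fderiv ℝ z p).comp (ContinuousLinearMap.fst ℝ E ℝ))))) (p, θ) :=
    HasFDerivAt.prodMk (HasFDerivAt.comp (p, θ) (f := Prod.fst) ht.hasFDerivAt hasFDerivAt_fst)
      (HasFDerivAt.prodMk (hasFDerivAt_pi.2 hX) (HasFDerivAt.prodMk (hasFDerivAt_pi.2 hY)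
        (HasFDerivAt.comp (p, θ) (f := Prod.fst) hz.hasFDerivAt hasFDerivAt_fst)))
  rw [hspun.fderiv]
  rw [hbundle.fderiv] at hinj
  rw [injective_iff_map_eq_zero] at hinj ⊢
  rintro ⟨v, s⟩ hu
  simp only [ContinuousLinearMap.prod_apply, Prod.mk_eq_zero, funext_iff, Pi.zero_apply,
    ContinuousLinearMap.pi_apply, ContinuousLinearMap.comp_apply,
    ContinuousLinearMap.coe_fst'] at hu
  obtain ⟨hT, hXc, hYc, hZc⟩ := hu
  have e0 := hXc ⟨0, by omega⟩
  have e1 := hXc ⟨1, by omega⟩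
  have f0 := hYc ⟨0, by omega⟩
  have f1 := hYc ⟨1, by omega⟩
  simp only [dSpin, ContinuousLinearMap.add_apply, ContinuousLinearMap.coe_smul', Pi.smul_apply,
    ContinuousLinearMap.comp_apply, ContinuousLinearMap.coe_snd', ContinuousLinearMap.coe_fst',
    ContinuousLinearMap.smulRight_apply, ContinuousLinearMap.one_apply,
    smul_eq_mul] at e0 e1 f0 f1
  have hsq := Real.sin_sq_add_cos_sq θ
  have hdx1 : fderiv ℝ (x 1) p v = 0 := by
    linear_combination Real.sin θ * e0 + Real.cos θ * e1 - (fderiv ℝ (x 1) p) v * hsq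
  have hdy1 : fderiv ℝ (y 1) p v = 0 := by
    linear_combination Real.sin θ * f0 + Real.cos θ * f1 - (fderiv ℝ (y 1) p) v * hsq
  have hs : s = 0 := by
    have h : x 1 p * s = 0 := by
      linear_combination Real.cos θ * e0 - Real.sin θ * e1 - x 1 p * s * hsq
    rcases mul_eq_zero.1 h with h | h
    · exact absurd h hx1
    · exact h
  have hxhigh : ∀ k : ℕ, k + 2 < n + 1 → fderiv ℝ (x (k + 2)) p v = 0 := by
    intro k hk
    have := hXc ⟨k + 2, hk⟩
    simpa [dSpin] using this
  have hyhigh : ∀ k : ℕ, k + 2 < n + 1 → fderiv ℝ (y (k + 2)) p v = 0 := by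
    intro k hk
    have := hYc ⟨k + 2, hk⟩
    simpa [dSpin] using this
  have hv : v = 0 := by
    apply hinj
    simp only [ContinuousLinearMap.prod_apply, Prod.mk_eq_zero, funext_iff, Pi.zero_apply,
      ContinuousLinearMap.pi_apply]
    refine ⟨hT, ?_, ?_, hZc⟩
    · rintro ⟨iv, hiv⟩
      match iv, hiv with
      | 0, _ => exact hdx1
      | (k + 1), hiv => exact hxhigh k (by omega)
    · rintro ⟨iv, hiv⟩
      match iv, hiv with
      | 0, _ => exact hdy1
      | (k + 1), hiv => exact hyhigh k (by omega)
  simp [hv, hs, Prod.ext_iff]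
end
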